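/- Let A be a dually pseudocomplemented Heyting algebra, a, b ∈ A, β := (a ∨ a*)⁺ and γ := a* ∨ b ∨ b*. Then (a → b)⁺ ∨ β ∨ γ = 1. -/
import Mathlib


theorem stmt14 (A : Type*) [HeytingAlgebra A] (p : A → A)
    (hp : ∀ x, x ⊔ p x = ⊤) (hleast : ∀ x z, x ⊔ z = ⊤ → p x ≤ z)
    (a b : A) :
    p (a ⇨ b) ⊔ p (a ⊔ (a ⇨ (⊥ : A))) ⊔ ((a ⇨ (⊥ : A)) ⊔ b ⊔ (b ⇨ (⊥ : A))) = ⊤ := by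
  have h1 := hp (a ⇨ b)
  have h2 := hp (a ⊔ (a ⇨ (⊥ : A)))
  have key : (a ⇨ b) ⊓ (a ⊔ (a ⇨ (⊥ : A))) ≤ (a ⇨ (⊥ : A)) ⊔ b ⊔ (b ⇨ (⊥ : A)) := by
    rw [inf_sup_left]
    refine sup_le ?_ ?_
    · exact le_sup_of_le_left (le_sup_of_le_right himp_inf_le)
    · exact le_sup_of_le_left (le_sup_of_le_left inf_le_right)
  refine top_unique ?_
  calc ⊤ = ((a ⇨ b) ⊔ p (a ⇨ b)) ⊓ ((a ⊔ (a ⇨ (⊥ : A))) ⊔ p (a ⊔ (a ⇨ (⊥ : A)))) := by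
        rw [h1, h2, top_inf_eq]
    _ ≤ _ := by
        rw [inf_sup_right, inf_sup_left]
        refine sup_le (sup_le ?_ ?_) ?_
        · exact le_sup_of_le_right key
        · exact le_sup_of_le_left (le_sup_of_le_right inf_le_right)
        · exact le_sup_of_le_left (le_sup_of_le_left inf_le_left)
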